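/- For a nonzero vector x in (F_{q^m})^n, the rank weight of x (the dimension over F_q of the F_q-subspace of F_{q^m} spanned by its coordinates) equals the minimum Hamming weight of x·M over all invertible n×n matrices M with entries in F_q. -/

import Mathlib

open Matrix

section Aux

variable {Fq Fqm : Type*} [Field Fq] [Field Fqm] [Algebra Fq Fqm] {n : ℕ}

lemma aux_span_vecMul_le (x : Fin n → Fqm) (M : Matrix (Fin n) (Fin n) Fq) :
    Submodule.span Fq (Set.range (x ᵥ* M.map (algebraMap Fq Fqm))) ≤
      Submodule.span Fq (Set.range x) := by
  rw [Submodule.span_le]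
  rintro _ ⟨k, rfl⟩
  have h : (x ᵥ* M.map (algebraMap Fq Fqm)) k = ∑ i, M i k • x i := by
    simp [Matrix.vecMul, dotProduct, Algebra.smul_def, mul_comm]
  rw [h]
  exact Submodule.sum_mem _ fun i _ => Submodule.smul_mem _ _ (Submodule.subset_span ⟨i, rfl⟩)

lemma aux_span_vecMul_eq (x : Fin n → Fqm) (M : Matrix (Fin n) (Fin n) Fq)
    (hM : IsUnit M.det) :
    Submodule.span Fq (Set.range (x ᵥ* M.map (algebraMap Fq Fqm))) =
      Submodule.span Fq (Set.range x) := by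
  refine le_antisymm (aux_span_vecMul_le x M) ?_
  have hx : x = (x ᵥ* M.map (algebraMap Fq Fqm)) ᵥ* (M⁻¹).map (algebraMap Fq Fqm) := by
    rw [Matrix.vecMul_vecMul, ← Matrix.map_mul, Matrix.mul_nonsing_inv _ hM, Matrix.map_one,
      Matrix.vecMul_one]
    · exact map_zero _
    · exact map_one _
  conv_lhs => rw [hx]
  exact aux_span_vecMul_le _ _

lemma aux_finrank_span_le_hammingNorm [DecidableEq Fqm] (y : Fin n → Fqm) :
    Module.finrank Fq (Submodule.span Fq (Set.range y)) ≤ hammingNorm y := by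
  classical
  set t : Finset (Fin n) := {k | y k ≠ 0} with ht
  set s : Finset Fqm := t.image y with hs
  have hspan : Submodule.span Fq (Set.range y) = Submodule.span Fq (s : Set Fqm) := by
    apply le_antisymm
    · rw [Submodule.span_le]
      rintro _ ⟨k, rfl⟩
      by_cases h : y k = 0
      · rw [h]; exact Submodule.zero_mem _
      · exact Submodule.subset_span (by simp [hs, ht, h]; exact ⟨k, h, rfl⟩)
    · rw [Submodule.span_le]
      intro z hz
      simp only [hs, Finset.coe_image, Set.mem_image] at hz
      obtain ⟨k, -, rfl⟩ := hz
      exact Submodule.subset_span ⟨k, rfl⟩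
  rw [hspan]
  calc Module.finrank Fq (Submodule.span Fq (s : Set Fqm)) ≤ s.card :=
        finrank_span_finset_le_card s
    _ ≤ t.card := Finset.card_image_le
    _ = hammingNorm y := rfl

end Aux

/-- For a nonzero vector `x ∈ (F_{q^m})^n`, the rank weight of `x` equals the
minimum Hamming weight of `x·M` over all invertible `n×n` matrices `M` over `F_q`. -/
theorem rankWeight_eq_min_hammingNorm
    {Fq Fqm : Type*} [Field Fq] [Field Fqm] [Algebra Fq Fqm]
    [Fintype Fq] [Fintype Fqm] [DecidableEq Fqm]
    {m n : ℕ} (hm : Module.finrank Fq Fqm = m) (hn : 0 < n)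
    (x : Fin n → Fqm) (hx : x ≠ 0) :
    Module.finrank Fq (Submodule.span Fq (Set.range x)) =
      sInf { w | ∃ M : Matrix (Fin n) (Fin n) Fq, IsUnit M.det ∧
        w = hammingNorm (x ᵥ* M.map (algebraMap Fq Fqm)) } := by
  classical
  set L : (Fin n → Fq) →ₗ[Fq] Fqm := Fintype.linearCombination Fq x with hLdef
  have hrange : LinearMap.range L = Submodule.span Fq (Set.range x) :=
    Fintype.range_linearCombination Fq x
  set r : ℕ := Module.finrank Fq (Submodule.span Fq (Set.range x)) with hr
  -- the kernel and a complement
  obtain ⟨p, hp⟩ := Submodule.exists_isCompl (LinearMap.ker L)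
  set dK : ℕ := Module.finrank Fq (LinearMap.ker L) with hdK
  set dp : ℕ := Module.finrank Fq p with hdp
  have hsum : dK + dp = n := by
    rw [hdK, hdp, Submodule.finrank_add_eq_of_isCompl hp, Module.finrank_fin_fun]
  have hranknull : r + dK = n := by
    have h1 := LinearMap.finrank_range_add_finrank_ker L
    rw [Module.finrank_fin_fun] at h1
    have h2 := congrArg (fun S : Submodule Fq Fqm => Module.finrank Fq S) hrange
    omega
  have hdpr : dp = r := by omega
  -- bases
  set bK : Module.Basis (Fin dK) Fq (LinearMap.ker L) := Module.finBasis Fq (LinearMap.ker L)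
  set bP : Module.Basis (Fin dp) Fq p := Module.finBasis Fq p
  set b0 : Module.Basis (Fin dK ⊕ Fin dp) Fq (Fin n → Fq) :=
    (bK.prod bP).map (Submodule.prodEquivOfIsCompl _ p hp) with hb0
  have hb0inl : ∀ i, b0 (Sum.inl i) = (bK i : Fin n → Fq) := by
    intro i
    simp [hb0, Submodule.coe_prodEquivOfIsCompl', Module.Basis.prod_apply]
  have hb0inr : ∀ j, b0 (Sum.inr j) = (bP j : Fin n → Fq) := by
    intro j
    simp [hb0, Submodule.coe_prodEquivOfIsCompl', Module.Basis.prod_apply]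
  have hLinl : ∀ i, L (b0 (Sum.inl i)) = 0 := by
    intro i; rw [hb0inl]; exact (bK i).2
  have hLinr : ∀ j, L (b0 (Sum.inr j)) ≠ 0 := by
    intro j hzero
    rw [hb0inr] at hzero
    have hmem : (bP j : Fin n → Fq) ∈ LinearMap.ker L ⊓ p :=
      ⟨hzero, (bP j).2⟩
    rw [hp.inf_eq_bot] at hmem
    have : bP j = 0 := Subtype.ext (by simpa using hmem)
    exact bP.ne_zero j this
  set ε : (Fin dK ⊕ Fin dp) ≃ Fin n := finSumFinEquiv.trans (finCongr hsum) with hε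
  set b1 : Module.Basis (Fin n) Fq (Fin n → Fq) := b0.reindex ε with hb1
  set M : Matrix (Fin n) (Fin n) Fq := (Pi.basisFun Fq (Fin n)).toMatrix b1 with hM
  have hMunit : IsUnit M.det := by
    haveI := Module.Basis.invertibleToMatrix (Pi.basisFun Fq (Fin n)) b1
    exact (Matrix.isUnit_iff_isUnit_det M).mp (isUnit_of_invertible M)
  have hMentry : ∀ i k, M i k = b1 k i := by
    intro i k
    rw [hM, Module.Basis.toMatrix_apply, Pi.basisFun_repr]
  set y : Fin n → Fqm := x ᵥ* M.map (algebraMap Fq Fqm) with hy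
  have hyk : ∀ k, y k = L (b1 k) := by
    intro k
    rw [hy, hLdef]
    simp only [Matrix.vecMul, dotProduct, Matrix.map_apply,
      Fintype.linearCombination_apply]
    refine Finset.sum_congr rfl fun i _ => ?_
    rw [hMentry, Algebra.smul_def, mul_comm]
  have hyε : ∀ j, y (ε j) = L (b0 j) := by
    intro j
    rw [hyk, hb1, Module.Basis.reindex_apply, Equiv.symm_apply_apply]
  have hham : hammingNorm y = dp := by
    have hstep1 : ({j | L (b0 j) ≠ 0} : Finset (Fin dK ⊕ Fin dp)).card
        = ({k | y k ≠ 0} : Finset (Fin n)).card := by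
      refine Finset.card_equiv ε fun j => ?_
      simp only [Finset.mem_filter, Finset.mem_univ, true_and, hyε j]
    have hstep2 : (Finset.univ : Finset (Fin dp)).card
        = ({j : Fin dK ⊕ Fin dp | L (b0 j) ≠ 0} : Finset _).card := by
      refine Finset.card_bij (fun j _ => Sum.inr j) ?_ ?_ ?_
      · intro j _
        simp only [Finset.mem_filter, Finset.mem_univ, true_and]
        exact hLinr j
      · intro a _ b _ h
        exact Sum.inr.inj h
      · rintro (i | j) hb
        · exfalso
          simp only [Finset.mem_filter, Finset.mem_univ, true_and] at hb
          exact hb (hLinl i)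
        · exact ⟨j, Finset.mem_univ j, rfl⟩
    have : hammingNorm y = ({k | y k ≠ 0} : Finset (Fin n)).card := rfl
    rw [this, ← hstep1, ← hstep2, Finset.card_univ, Fintype.card_fin]
  have hmem : r ∈ { w | ∃ M : Matrix (Fin n) (Fin n) Fq, IsUnit M.det ∧
      w = hammingNorm (x ᵥ* M.map (algebraMap Fq Fqm)) } := by
    exact ⟨M, hMunit, by rw [← hy, hham, hdpr]⟩
  apply le_antisymm
  · refine le_csInf ⟨r, hmem⟩ ?_
    rintro w ⟨N, hN, rfl⟩
    have := aux_finrank_span_le_hammingNorm (Fq := Fq) (x ᵥ* N.map (algebraMap Fq Fqm))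
    rwa [aux_span_vecMul_eq x N hN] at this
  · exact Nat.sInf_le hmem
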